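/- Let T be a tree with exactly one exterior major vertex v, and let ℓ_1, ℓ_2, …, ℓ_a (a ≥ 3) be the terminal vertices of v, ordered so that d(v,ℓ_1) ≤ d(v,ℓ_2) ≤ … ≤ d(v,ℓ_a). Then κ(T) = d(ℓ_1,ℓ_2), and if d(v,ℓ_1) = d(v,ℓ_2), then dim_f^k(T) = k·a/2 for every real number k with 1 ≤ k ≤ κ(T). -/

import Mathlib

open Finset

namespace FracDim

variable {V : Type*}

/-- `R{x,y}`: the set of vertices `z` with `d(x,z) ≠ d(y,z)`. -/
noncomputable def resSet [Fintype V] (G : SimpleGraph V) (x y : V) : Finset V :=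
  Finset.univ.filter (fun z => G.dist x z ≠ G.dist y z)

/-- `κ(G) = min { |R{x,y}| : x ≠ y }`. -/
noncomputable def kappa [Fintype V] (G : SimpleGraph V) : ℕ :=
  sInf {n : ℕ | ∃ x y : V, x ≠ y ∧ (resSet G x y).card = n}

/-- A `k`-resolving function: `g : V → [0,1]` with `g(R{x,y}) ≥ k` for all distinct `x, y`. -/
def IsKResolving [Fintype V] (G : SimpleGraph V) (k : ℝ) (g : V → ℝ) : Prop :=
  (∀ v, 0 ≤ g v ∧ g v ≤ 1) ∧
    ∀ x y : V, x ≠ y → k ≤ ∑ z ∈ resSet G x y, g z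

/-- The fractional `k`-metric dimension of `G`. -/
noncomputable def fracKDim [Fintype V] (G : SimpleGraph V) (k : ℝ) : ℝ :=
  sInf {s : ℝ | ∃ g : V → ℝ, IsKResolving G k g ∧ s = ∑ v, g v}

/-- The fractional metric dimension of `G`. -/
noncomputable def fracDim [Fintype V] (G : SimpleGraph V) : ℝ :=
  fracKDim G 1

end FracDim

namespace FracDim

open scoped Classical

variable {V : Type*}

/-- A leaf is a vertex of degree one. -/
def IsLeaf [Fintype V] (G : SimpleGraph V) [DecidableRel G.Adj] (u : V) : Prop :=
  G.degree u = 1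

/-- A major vertex is a vertex of degree at least three. -/
def IsMajor [Fintype V] (G : SimpleGraph V) [DecidableRel G.Adj] (v : V) : Prop :=
  3 ≤ G.degree v

/-- A leaf `u` is a terminal vertex of a major vertex `v` if `d(u,v) < d(u,w)` for every
other major vertex `w`. -/
def IsTerminalOf [Fintype V] (G : SimpleGraph V) [DecidableRel G.Adj] (u v : V) : Prop :=
  IsLeaf G u ∧ IsMajor G v ∧ ∀ w, IsMajor G w → w ≠ v → G.dist u v < G.dist u w

/-- An exterior major vertex is a major vertex with at least one terminal vertex. -/
def IsExteriorMajor [Fintype V] (G : SimpleGraph V) [DecidableRel G.Adj] (v : V) : Prop :=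
  IsMajor G v ∧ ∃ u, IsTerminalOf G u v

/-- The vertex set of the subtree `T_v`: `v` together with all vertices belonging to the
paths joining `v` with its terminal vertices (in a tree, `z` lies on the unique `v-u`
path iff `d(v,z) + d(z,u) = d(v,u)`). -/
def branchSet [Fintype V] (G : SimpleGraph V) [DecidableRel G.Adj] (v : V) : Set V :=
  {z | z = v ∨ ∃ u, IsTerminalOf G u v ∧ G.dist v z + G.dist z u = G.dist v u}

/-- The terminal degree of a vertex: the number of its terminal vertices. -/
noncomputable def terDeg [Fintype V] (G : SimpleGraph V) [DecidableRel G.Adj] (v : V) : ℕ :=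
  {u | IsTerminalOf G u v}.ncard

end FracDim

namespace FracDim

variable {V : Type*}

namespace TreeAux

variable {G : SimpleGraph V} {u v w x y z : V}


lemma getVert_mem_support (p : G.Walk u v) (i : ℕ) : p.getVert i ∈ p.support := by
  induction p generalizing i with
  | nil => simp [SimpleGraph.Walk.getVert]
  | cons h q ih =>
    cases i with
    | zero => simp
    | succ n => simpa using Or.inr (ih n)

lemma dist_getVert_le (hc : G.Connected) (p : G.Walk u v) (t : ℕ) :
    G.dist u (p.getVert t) ≤ t := by
  induction p generalizing t with
  | nil => simp [SimpleGraph.Walk.getVert, SimpleGraph.dist_self]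
  | @cons a b c h q ih =>
    cases t with
    | zero => simp
    | succ n =>
      have h0 : G.dist a b = 1 := (SimpleGraph.dist_eq_one_iff_adj).2 h
      have h1 : G.dist a (q.getVert n) ≤ G.dist a b + G.dist b (q.getVert n) :=
        hc.dist_triangle
      have h2 := ih n
      simpa using by omega

lemma walk_seg_le (hc : G.Connected) (p : G.Walk u v) (s t : ℕ) (hst : s ≤ t) :
    G.dist (p.getVert s) (p.getVert t) ≤ t - s := by
  induction p generalizing s t with
  | nil => simp [SimpleGraph.Walk.getVert, SimpleGraph.dist_self]
  | @cons a b c h q ih =>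
    cases s with
    | zero =>
      simpa using (dist_getVert_le hc (SimpleGraph.Walk.cons h q) t)
    | succ m =>
      cases t with
      | zero => omega
      | succ n => simpa using ih m n (by omega)

lemma getVert_dist_le (hc : G.Connected) (p : G.Walk u v) (t : ℕ) (ht : t ≤ p.length) :
    G.dist (p.getVert t) v ≤ p.length - t := by
  have := walk_seg_le hc p t p.length ht
  simpa using this

/-- On a geodesic walk, distances between intermediate vertices are index differences. -/
lemma geo_seg (hc : G.Connected) (p : G.Walk u v) (hp : p.length = G.dist u v)
    (s t : ℕ) (hst : s ≤ t) (ht : t ≤ p.length) :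
    G.dist (p.getVert s) (p.getVert t) + s = t := by
  have h1 := walk_seg_le hc p s t hst
  have h2 := dist_getVert_le hc p s
  have h3 := getVert_dist_le hc p t ht
  have h4 : G.dist u v ≤ G.dist u (p.getVert s) + G.dist (p.getVert s) (p.getVert t)
      + G.dist (p.getVert t) v := by
    calc G.dist u v ≤ G.dist u (p.getVert s) + G.dist (p.getVert s) v := hc.dist_triangle
      _ ≤ _ + (G.dist (p.getVert s) (p.getVert t) + G.dist (p.getVert t) v) := by
          exact Nat.add_le_add_left (hc.dist_triangle) _
      _ = _ := by omega
  omega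

/-- A vertex on a geodesic walk is "between" the endpoints, at position its distance. -/
lemma geo_support (hc : G.Connected) (p : G.Walk u v) (hp : p.length = G.dist u v)
    (hz : z ∈ p.support) :
    G.dist u z + G.dist z v = G.dist u v ∧
      ∃ s ≤ p.length, p.getVert s = z ∧ G.dist u z = s := by
  obtain ⟨q, r, rfl⟩ := SimpleGraph.Walk.mem_support_iff_exists_append.mp hz
  have hlen : q.length + r.length = G.dist u v := by
    simpa [SimpleGraph.Walk.length_append] using hp
  have h1 : G.dist u z ≤ q.length := SimpleGraph.dist_le q
  have h2 : G.dist z v ≤ r.length := SimpleGraph.dist_le r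
  have h3 : G.dist u v ≤ G.dist u z + G.dist z v := hc.dist_triangle
  have hq : G.dist u z = q.length := by omega
  refine ⟨by omega, q.length, by simp [SimpleGraph.Walk.length_append], ?_, hq⟩
  rw [SimpleGraph.Walk.getVert_append]
  simp

/-- Middle-segment of a geodesic decomposition computes distance. -/
lemma seg_dist (hc : G.Connected) {a b : V} (A : G.Walk u a) (B : G.Walk a b) (C : G.Walk b v)
    (h : (A.append (B.append C)).length = G.dist u v) :
    G.dist a b = B.length := by
  have h1 : G.dist a b ≤ B.length := SimpleGraph.dist_le B
  have h2 : G.dist u a ≤ A.length := SimpleGraph.dist_le A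
  have h3 : G.dist b v ≤ C.length := SimpleGraph.dist_le C
  have h4 : G.dist u v ≤ G.dist u a + (G.dist a b + G.dist b v) := by
    calc G.dist u v ≤ G.dist u a + G.dist a v := hc.dist_triangle
      _ ≤ _ + (G.dist a b + G.dist b v) := Nat.add_le_add_left (hc.dist_triangle) _
  simp [SimpleGraph.Walk.length_append] at h
  omega

lemma isPath_concat {w : V} {p : G.Walk u v} (hp : p.IsPath) (h : G.Adj v w)
    (hw : w ∉ p.support) : (p.concat h).IsPath := by
  rw [← SimpleGraph.Walk.isPath_reverse_iff, SimpleGraph.Walk.reverse_concat]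
  exact hp.reverse.cons (by simpa using hw)

lemma dist_lt_card [Fintype V] (hc : G.Connected) (u v : V) :
    G.dist u v < Fintype.card V := by
  obtain ⟨p, hp⟩ := hc.exists_walk_length_eq_dist u v
  have := (p.isPath_of_length_eq_dist hp).length_lt
  omega

/-- In a tree, two points between the same endpoints at equal distance coincide. -/
lemma eq_of_btw (hT : G.IsTree) (hx : G.dist u x + G.dist x v = G.dist u v)
    (hw : G.dist u w + G.dist w v = G.dist u v) (hd : G.dist u x = G.dist u w) :
    x = w := by
  have hc := hT.isConnected
  obtain ⟨a, ha⟩ := hc.exists_walk_length_eq_dist u x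
  obtain ⟨b, hb⟩ := hc.exists_walk_length_eq_dist x v
  obtain ⟨c, hcw⟩ := hc.exists_walk_length_eq_dist u w
  obtain ⟨e, he⟩ := hc.exists_walk_length_eq_dist w v
  have hP1 : (a.append b).length = G.dist u v := by
    rw [SimpleGraph.Walk.length_append]; omega
  have hP2 : (c.append e).length = G.dist u v := by
    rw [SimpleGraph.Walk.length_append]; omega
  have p1 := (a.append b).isPath_of_length_eq_dist hP1
  have p2 := (c.append e).isPath_of_length_eq_dist hP2
  have heq : a.append b = c.append e := by
    have := hT.IsAcyclic.path_unique ⟨a.append b, p1⟩ ⟨c.append e, p2⟩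
    simpa using congrArg Subtype.val this
  have hxs : x ∈ (c.append e).support := by
    rw [← heq]
    exact (SimpleGraph.Walk.mem_support_append_iff a b).2
      (Or.inl (SimpleGraph.Walk.end_mem_support a))
  rcases (SimpleGraph.Walk.mem_support_append_iff c e).1 hxs with h1 | h1
  · have := (geo_support hc c hcw h1).1
    have h0 : G.dist x w = 0 := by
      have hcm : G.dist w x = G.dist x w := SimpleGraph.dist_comm ..
      omega
    exact ((hc.dist_eq_zero_iff).1 h0)
  · have := (geo_support hc e he h1).1
    have h0 : G.dist w x = 0 := by omega
    exact ((hc.dist_eq_zero_iff).1 h0).symm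

/-- In a tree, adjacent vertices have different distances to every vertex. -/
lemma adj_dist_ne (hT : G.IsTree) (hadj : G.Adj x y) (z : V) :
    G.dist z x ≠ G.dist z y := by
  have hc := hT.isConnected
  intro h
  obtain ⟨p, hp⟩ := hc.exists_walk_length_eq_dist z x
  obtain ⟨q, hq⟩ := hc.exists_walk_length_eq_dist z y
  have hxq : x ∉ q.support := by
    intro hmem
    have := (geo_support hc q hq hmem).1
    have h0 : G.dist x y = 0 := by omega
    exact hadj.ne ((hc.dist_eq_zero_iff).1 h0)
  have hq2 : (q.concat hadj.symm).IsPath :=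
    isPath_concat (q.isPath_of_length_eq_dist hq) hadj.symm hxq
  have hp2 := p.isPath_of_length_eq_dist hp
  have heq : p = q.concat hadj.symm := by
    have := hT.IsAcyclic.path_unique ⟨p, hp2⟩ ⟨q.concat hadj.symm, hq2⟩
    simpa using congrArg Subtype.val this
  have : p.length = q.length + 1 := by rw [heq, SimpleGraph.Walk.length_concat]
  omega

lemma adj_dist_cases (hT : G.IsTree) (hadj : G.Adj x y) (z : V) :
    G.dist z y = G.dist z x + 1 ∨ G.dist z x = G.dist z y + 1 := by
  have hc := hT.isConnected
  have h1 : G.dist x y = 1 := (SimpleGraph.dist_eq_one_iff_adj).2 hadj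
  have h2 : G.dist z y ≤ G.dist z x + G.dist x y := hc.dist_triangle
  have h3 : G.dist z x ≤ G.dist z y + G.dist y x := hc.dist_triangle
  have h4 : G.dist y x = 1 := by rw [SimpleGraph.dist_comm]; exact h1
  have := adj_dist_ne hT hadj z
  omega

/-- uniqueness of the neighbor towards `v`. -/
lemma toward_unique (hT : G.IsTree) {x1 x2 : V} (h1 : G.Adj z x1) (h2 : G.Adj z x2)
    (hd1 : G.dist v x1 + 1 = G.dist v z) (hd2 : G.dist v x2 + 1 = G.dist v z) :
    x1 = x2 := by
  have hc := hT.isConnected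
  obtain ⟨p1, hp1⟩ := hc.exists_walk_length_eq_dist v x1
  obtain ⟨p2, hp2⟩ := hc.exists_walk_length_eq_dist v x2
  have key : ∀ (x : V) (h : G.Adj x z) (p : G.Walk v x), p.length = G.dist v x →
      G.dist v x + 1 = G.dist v z → ((p.concat h).IsPath ∧
        (p.concat h).getVert (G.dist v x) = x) := by
    intro x h p hp hd
    constructor
    · refine isPath_concat (p.isPath_of_length_eq_dist hp) h ?_
      intro hmem
      have := (geo_support hc p hp hmem).1
      have h0 : G.dist z x = 0 := by
        have := SimpleGraph.dist_comm (G := G) (u := x) (v := z)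
        omega
      exact h.ne' ((hc.dist_eq_zero_iff).1 h0)
    · rw [SimpleGraph.Walk.concat_eq_append, SimpleGraph.Walk.getVert_append]
      simp [hp]
  obtain ⟨k1, g1⟩ := key x1 h1.symm p1 hp1 hd1
  obtain ⟨k2, g2⟩ := key x2 h2.symm p2 hp2 hd2
  have heq : p1.concat h1.symm = p2.concat h2.symm := by
    have := hT.IsAcyclic.path_unique ⟨_, k1⟩ ⟨_, k2⟩
    simpa using congrArg Subtype.val this
  have hd : G.dist v x1 = G.dist v x2 := by omega
  rw [← g1, ← g2, heq, hd]

/-- existence of the neighbor towards `v`. -/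
lemma toward_exists (hc : G.Connected) (hne : z ≠ v) :
    ∃ x, G.Adj z x ∧ G.dist v x + 1 = G.dist v z := by
  obtain ⟨p, hp⟩ := hc.exists_walk_length_eq_dist v z
  have hL : 1 ≤ p.length := by
    rw [hp]
    exact hc.pos_dist_of_ne (Ne.symm hne)
  refine ⟨p.getVert (p.length - 1), ?_, ?_⟩
  · have := p.adj_getVert_succ (i := p.length - 1) (by omega)
    have h2 : p.length - 1 + 1 = p.length := by omega
    rw [h2] at this
    simpa using this.symm
  · have h0 := geo_seg hc p hp 0 (p.length - 1) (by omega) (by omega)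
    rw [p.getVert_zero] at h0
    omega

end TreeAux

section Structure

variable [Fintype V] (G : SimpleGraph V) [DecidableRel G.Adj]

lemma leaf_unique_nbr {G : SimpleGraph V} [DecidableRel G.Adj] {u x y : V}
    (hu : IsLeaf G u) (hx : G.Adj u x) (hy : G.Adj u y) : x = y := by
  have hxm : x ∈ G.neighborFinset u := (SimpleGraph.mem_neighborFinset ..).2 hx
  have hym : y ∈ G.neighborFinset u := (SimpleGraph.mem_neighborFinset ..).2 hy
  have h1 : (G.neighborFinset u).card ≤ 1 := by
    have h2 : G.degree u = 1 := hu
    have h3 : (G.neighborFinset u).card = G.degree u :=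
      SimpleGraph.card_neighborFinset_eq_degree ..
    omega
  exact Finset.card_le_one.1 h1 _ hxm _ hym

lemma exists_leaf_btw {G : SimpleGraph V} [DecidableRel G.Adj] (hT : G.IsTree) (v : V) :
    ∀ z, z ≠ v → ∃ u, IsLeaf G u ∧ G.dist v z + G.dist z u = G.dist v u := by
  have hc := hT.isConnected
  suffices H : ∀ n, ∀ z, z ≠ v → Fintype.card V - G.dist v z ≤ n →
      ∃ u, IsLeaf G u ∧ G.dist v z + G.dist z u = G.dist v u by
    intro z hz
    exact H (Fintype.card V) z hz (by omega)
  intro n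
  induction n with
  | zero =>
    intro z hz h0
    have := TreeAux.dist_lt_card hc v z
    omega
  | succ n ih =>
    intro z hz h0
    by_cases hleaf : IsLeaf G z
    · exact ⟨z, hleaf, by simp⟩
    · obtain ⟨x0, hx0a, hx0d⟩ := TreeAux.toward_exists hc hz
      have hdeg1 : 0 < G.degree z :=
        (SimpleGraph.degree_pos_iff_exists_adj G z).2 ⟨x0, hx0a⟩
      have hdeg : 1 < G.degree z := by
        rcases Nat.lt_or_ge 1 (G.degree z) with h | h
        · exact h
        · exact absurd (by omega : G.degree z = 1) hleaf
      obtain ⟨y, hym, hyne⟩ := Finset.exists_mem_ne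
        (s := G.neighborFinset z)
        (by rw [SimpleGraph.card_neighborFinset_eq_degree]; exact hdeg) x0
      have hya : G.Adj z y := (SimpleGraph.mem_neighborFinset ..).1 hym
      have hyd : G.dist v y = G.dist v z + 1 := by
        rcases TreeAux.adj_dist_cases hT hya v with h | h
        · exact h
        · exact absurd (TreeAux.toward_unique hT hya hx0a (by omega) hx0d) hyne
      have hyv : y ≠ v := by
        intro h
        rw [h, SimpleGraph.dist_self] at hyd
        omega
      obtain ⟨u, hu, hbu⟩ := ih y hyv (by
        have := TreeAux.dist_lt_card hc v y
        omega)
      refine ⟨u, hu, ?_⟩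
      have hzy : G.dist z y = 1 := (SimpleGraph.dist_eq_one_iff_adj).2 hya
      have t1 : G.dist v u ≤ G.dist v z + G.dist z u := hc.dist_triangle
      have t2 : G.dist z u ≤ G.dist z y + G.dist y u := hc.dist_triangle
      omega

lemma major_eq {G : SimpleGraph V} [DecidableRel G.Adj] (hT : G.IsTree) {v : V}
    (hv : IsExteriorMajor G v) (huniq : ∀ w, IsExteriorMajor G w → w = v) :
    ∀ w, IsMajor G w → w = v := by
  classical
  have hc := hT.isConnected
  have hM : (Finset.univ.filter (fun w => IsMajor G w)).Nonempty :=
    ⟨v, by simp [hv.1]⟩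
  obtain ⟨w, hwM, hmax⟩ := Finset.exists_max_image _ (fun z => G.dist v z) hM
  have hwmaj : IsMajor G w := (Finset.mem_filter.1 hwM).2
  have hmax' : ∀ z, IsMajor G z → G.dist v z ≤ G.dist v w := fun z hz =>
    hmax z (by simp [hz])
  by_cases hwv : w = v
  · subst hwv
    intro z hz
    have h5 := hmax' z hz
    rw [SimpleGraph.dist_self] at h5
    exact ((hc.dist_eq_zero_iff).1 (by omega)).symm
  · exfalso
    obtain ⟨x0, hx0a, hx0d⟩ := TreeAux.toward_exists hc hwv
    have hdeg : 1 < G.degree w := by have : (3:ℕ) ≤ G.degree w := hwmaj; omega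
    obtain ⟨z1, hz1m, hz1ne⟩ := Finset.exists_mem_ne
      (s := G.neighborFinset w)
      (by rw [SimpleGraph.card_neighborFinset_eq_degree]; exact hdeg) x0
    have hz1a : G.Adj w z1 := (SimpleGraph.mem_neighborFinset ..).1 hz1m
    have hz1d : G.dist v z1 = G.dist v w + 1 := by
      rcases TreeAux.adj_dist_cases hT hz1a v with h | h
      · exact h
      · exact absurd (TreeAux.toward_unique hT hz1a hx0a (by omega) hx0d) hz1ne
    have hz1v : z1 ≠ v := by
      intro h
      rw [h, SimpleGraph.dist_self] at hz1d
      omega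
    obtain ⟨u, hu, hbu⟩ := exists_leaf_btw hT v z1 hz1v
    have hwz1 : G.dist w z1 = 1 := (SimpleGraph.dist_eq_one_iff_adj).2 hz1a
    have t1 : G.dist v u ≤ G.dist v w + G.dist w u := hc.dist_triangle
    have t2 : G.dist w u ≤ G.dist w z1 + G.dist z1 u := hc.dist_triangle
    have hBvwu : G.dist v w + G.dist w u = G.dist v u := by omega
    have hterm : IsTerminalOf G u w := by
      refine ⟨hu, hwmaj, ?_⟩
      intro x hx hxw
      by_contra hle
      push_neg at hle
      have c1 : G.dist u w = G.dist w u := SimpleGraph.dist_comm ..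
      have c2 : G.dist u x = G.dist x u := SimpleGraph.dist_comm ..
      have t3 : G.dist v u ≤ G.dist v x + G.dist x u := hc.dist_triangle
      have t4 := hmax' x hx
      have e1 : G.dist v x + G.dist x u = G.dist v u := by omega
      have e2 : G.dist v x = G.dist v w := by omega
      exact hxw (TreeAux.eq_of_btw hT e1 hBvwu e2)
    exact hwv (huniq w ⟨hwmaj, u, hterm⟩)

lemma dist_terminal_add {G : SimpleGraph V} [DecidableRel G.Adj] (hT : G.IsTree) {v : V}
    (hmaj : ∀ w, IsMajor G w → w = v) {u1 u2 : V}
    (h1 : IsTerminalOf G u1 v) (h2 : IsTerminalOf G u2 v) (hne : u1 ≠ u2) :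
    G.dist u1 v + G.dist v u2 = G.dist u1 u2 := by
  classical
  have hc := hT.isConnected
  obtain ⟨P, hP⟩ := hc.exists_walk_length_eq_dist u1 u2
  obtain ⟨m, hmS, hmin⟩ := Finset.exists_min_image P.support.toFinset (fun z => G.dist v z)
    ⟨u1, by simp⟩
  have hmsup : m ∈ P.support := List.mem_toFinset.1 hmS
  have hmin' : ∀ z ∈ P.support, G.dist v m ≤ G.dist v z := fun z hz =>
    hmin z (List.mem_toFinset.2 hz)
  by_cases hm0 : m = v
  · subst hm0
    exact (TreeAux.geo_support hc P hP hmsup).1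
  · exfalso
    obtain ⟨-, s, hs, hgv, hds⟩ := TreeAux.geo_support hc P hP hmsup
    have hLpos : 1 ≤ P.length := by
      rw [hP]
      exact hc.pos_dist_of_ne hne
    obtain ⟨m', hm'a, hm'd⟩ := TreeAux.toward_exists hc hm0
    have hs0 : s ≠ 0 := by
      intro rfl'
      subst rfl'
      have hmu1 : m = u1 := by rw [← hgv, SimpleGraph.Walk.getVert_zero]
      subst hmu1
      have hadj : G.Adj m (P.getVert 1) := by
        have := P.adj_getVert_succ (i := 0) (by omega)
        simpa using this
      have heq : P.getVert 1 = m' := leaf_unique_nbr h1.1 hadj hm'a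
      have := hmin' (P.getVert 1) (TreeAux.getVert_mem_support P 1)
      rw [heq] at this
      omega
    have hsL : s ≠ P.length := by
      intro hsl
      have hmu2 : m = u2 := by rw [← hgv, hsl, SimpleGraph.Walk.getVert_length]
      subst hmu2
      have hadj : G.Adj m (P.getVert (P.length - 1)) := by
        have := P.adj_getVert_succ (i := P.length - 1) (by omega)
        have h2' : P.length - 1 + 1 = P.length := by omega
        rw [h2'] at this
        simpa using this.symm
      have heq : P.getVert (P.length - 1) = m' := leaf_unique_nbr h2.1 hadj hm'a
      have := hmin' (P.getVert (P.length - 1)) (TreeAux.getVert_mem_support P _)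
      rw [heq] at this
      omega
    have hslt : s < P.length := lt_of_le_of_ne hs hsL
    have hb : G.Adj (P.getVert (s-1)) m := by
      have := P.adj_getVert_succ (i := s - 1) (by omega)
      have h2' : s - 1 + 1 = s := by omega
      rw [h2', hgv] at this
      exact this
    have hcadj : G.Adj m (P.getVert (s+1)) := by
      have := P.adj_getVert_succ (i := s) (by omega)
      rw [hgv] at this
      exact this
    have hbc : P.getVert (s-1) ≠ P.getVert (s+1) := by
      intro h
      have h6 := TreeAux.geo_seg hc P hP (s-1) (s+1) (by omega) (by omega)
      rw [h, SimpleGraph.dist_self] at h6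
      omega
    have hm'b : m' ≠ P.getVert (s-1) := by
      intro h
      have := hmin' (P.getVert (s-1)) (TreeAux.getVert_mem_support P _)
      rw [← h] at this
      omega
    have hm'c : m' ≠ P.getVert (s+1) := by
      intro h
      have := hmin' (P.getVert (s+1)) (TreeAux.getVert_mem_support P _)
      rw [← h] at this
      omega
    have hsub : ({m', P.getVert (s-1), P.getVert (s+1)} : Finset V) ⊆ G.neighborFinset m := by
      intro t ht
      simp only [Finset.mem_insert, Finset.mem_singleton] at ht
      rcases ht with rfl | rfl | rfl
      · exact (SimpleGraph.mem_neighborFinset ..).2 hm'a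
      · exact (SimpleGraph.mem_neighborFinset ..).2 hb.symm
      · exact (SimpleGraph.mem_neighborFinset ..).2 hcadj
    have hcard : ({m', P.getVert (s-1), P.getVert (s+1)} : Finset V).card = 3 := by
      rw [Finset.card_insert_of_notMem (by simp [hm'b, hm'c]),
        Finset.card_insert_of_notMem (by simp [hbc]), Finset.card_singleton]
    have hmmaj : IsMajor G m := by
      have := Finset.card_le_card hsub
      rw [hcard, SimpleGraph.card_neighborFinset_eq_degree] at this
      exact this
    exact hm0 (hmaj m hmmaj)

end Structure

section Spider

open scoped Classical

variable [Fintype V] {G : SimpleGraph V} [DecidableRel G.Adj] {v : V} {a : ℕ} {ℓ : Fin a → V}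

/-- Bundle of the hypotheses of the main theorem. -/
structure SpiderHyp (G : SimpleGraph V) [DecidableRel G.Adj] (v : V) (a : ℕ)
    (ℓ : Fin a → V) : Prop where
  hT : G.IsTree
  hv : IsExteriorMajor G v
  hmaj : ∀ w, IsMajor G w → w = v
  ha : 3 ≤ a
  hinj : Function.Injective ℓ
  hterm : ∀ i, IsTerminalOf G (ℓ i) v
  hall : ∀ u, IsTerminalOf G u v → ∃ i, ℓ i = u
  hmono : ∀ i j : Fin a, i ≤ j → G.dist v (ℓ i) ≤ G.dist v (ℓ j)

/-- `z` lies (strictly) on the leg from `v` to the terminal vertex `ℓ i`. -/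
def onLeg (G : SimpleGraph V) (v : V) {a : ℕ} (ℓ : Fin a → V) (i : Fin a) (z : V) : Prop :=
  z ≠ v ∧ G.dist v z + G.dist z (ℓ i) = G.dist v (ℓ i)

namespace SpiderHyp

variable (S : SpiderHyp G v a ℓ)
include S

lemma hc : G.Connected := S.hT.isConnected

lemma leaf_ne_v (i : Fin a) : ℓ i ≠ v := by
  intro h
  have h1 : G.degree (ℓ i) = 1 := (S.hterm i).1
  have h2 : 3 ≤ G.degree v := S.hv.1
  rw [h] at h1
  omega

lemma nl_pos (i : Fin a) : 1 ≤ G.dist v (ℓ i) :=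
  S.hc.pos_dist_of_ne (Ne.symm (S.leaf_ne_v i))

lemma onLeg_self (i : Fin a) : onLeg G v ℓ i (ℓ i) :=
  ⟨S.leaf_ne_v i, by simp [SimpleGraph.dist_self]⟩

lemma leg_cover {z : V} (hz : z ≠ v) : ∃ i, onLeg G v ℓ i z := by
  obtain ⟨u, hu, hbu⟩ := exists_leaf_btw S.hT v z hz
  have hterm : IsTerminalOf G u v :=
    ⟨hu, S.hv.1, fun w hw hwne => absurd (S.hmaj w hw) hwne⟩
  obtain ⟨i, rfl⟩ := S.hall u hterm
  exact ⟨i, hz, hbu⟩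

lemma split {i j : Fin a} (hij : i ≠ j) :
    G.dist (ℓ i) v + G.dist v (ℓ j) = G.dist (ℓ i) (ℓ j) :=
  dist_terminal_add S.hT S.hmaj (S.hterm i) (S.hterm j) (fun h => hij (S.hinj h))

lemma onLeg_pos {i : Fin a} {z : V} (hz : onLeg G v ℓ i z) : 1 ≤ G.dist v z :=
  S.hc.pos_dist_of_ne (Ne.symm hz.1)

lemma onLeg_le {i : Fin a} {z : V} (hz : onLeg G v ℓ i z) : G.dist v z ≤ G.dist v (ℓ i) := by
  have := hz.2
  omega

lemma dist_same_leg {i : Fin a} {z y : V} (hz : onLeg G v ℓ i z) (hy : onLeg G v ℓ i y)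
    (hle : G.dist v y ≤ G.dist v z) : G.dist v y + G.dist y z = G.dist v z := by
  have hc := S.hc
  obtain ⟨p1, hp1⟩ := hc.exists_walk_length_eq_dist v z
  obtain ⟨p2, hp2⟩ := hc.exists_walk_length_eq_dist z (ℓ i)
  obtain ⟨q1, hq1⟩ := hc.exists_walk_length_eq_dist v y
  obtain ⟨q2, hq2⟩ := hc.exists_walk_length_eq_dist y (ℓ i)
  have hP : (p1.append p2).length = G.dist v (ℓ i) := by
    rw [SimpleGraph.Walk.length_append]
    have := hz.2
    omega
  have hQ : (q1.append q2).length = G.dist v (ℓ i) := by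
    rw [SimpleGraph.Walk.length_append]
    have := hy.2
    omega
  have heq : p1.append p2 = q1.append q2 := by
    have := S.hT.IsAcyclic.path_unique
      ⟨p1.append p2, (p1.append p2).isPath_of_length_eq_dist hP⟩
      ⟨q1.append q2, (q1.append q2).isPath_of_length_eq_dist hQ⟩
    simpa using congrArg Subtype.val this
  have hys : y ∈ (p1.append p2).support := by
    rw [heq]
    exact (SimpleGraph.Walk.mem_support_append_iff q1 q2).2
      (Or.inl (SimpleGraph.Walk.end_mem_support q1))
  rcases (SimpleGraph.Walk.mem_support_append_iff p1 p2).1 hys with h1 | h1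
  · exact (TreeAux.geo_support hc p1 hp1 h1).1
  · have h2 := (TreeAux.geo_support hc p2 hp2 h1).1
    have c1 : G.dist z y = G.dist y z := SimpleGraph.dist_comm ..
    have e1 := hz.2
    have e2 := hy.2
    omega

lemma same_leg_cases {i : Fin a} {z x : V} (hz : onLeg G v ℓ i z) (hx : onLeg G v ℓ i x) :
    G.dist x z + G.dist v z = G.dist v x ∨ G.dist x z + G.dist v x = G.dist v z := by
  rcases le_total (G.dist v z) (G.dist v x) with h | h
  · left
    have := S.dist_same_leg hx hz h
    have c : G.dist z x = G.dist x z := SimpleGraph.dist_comm ..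
    omega
  · right
    have := S.dist_same_leg hz hx h
    omega

lemma dist_cross_leg {i j : Fin a} (hij : i ≠ j) {z y : V} (hz : onLeg G v ℓ i z)
    (hy : onLeg G v ℓ j y) : G.dist z y = G.dist v z + G.dist v y := by
  have hc := S.hc
  obtain ⟨A, hA⟩ := hc.exists_walk_length_eq_dist (ℓ i) z
  obtain ⟨B1, hB1⟩ := hc.exists_walk_length_eq_dist z v
  obtain ⟨B2, hB2⟩ := hc.exists_walk_length_eq_dist v y
  obtain ⟨C, hC⟩ := hc.exists_walk_length_eq_dist y (ℓ j)
  have hsplit := S.split hij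
  have c1 : G.dist (ℓ i) z = G.dist z (ℓ i) := SimpleGraph.dist_comm ..
  have c2 : G.dist z v = G.dist v z := SimpleGraph.dist_comm ..
  have c3 : G.dist (ℓ i) v = G.dist v (ℓ i) := SimpleGraph.dist_comm ..
  have hW : (A.append ((B1.append B2).append C)).length = G.dist (ℓ i) (ℓ j) := by
    simp only [SimpleGraph.Walk.length_append]
    have e1 := hz.2
    have e2 := hy.2
    omega
  have := TreeAux.seg_dist hc A (B1.append B2) C hW
  rw [SimpleGraph.Walk.length_append] at this
  omega

lemma leg_unique {i j : Fin a} {z : V} (hz : onLeg G v ℓ i z) (hz' : onLeg G v ℓ j z) :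
    i = j := by
  by_contra hij
  have := S.dist_cross_leg hij hz hz'
  have h0 : G.dist z z = 0 := SimpleGraph.dist_self ..
  have := S.onLeg_pos hz
  omega

lemma onLeg_inj {i : Fin a} {z y : V} (hz : onLeg G v ℓ i z) (hy : onLeg G v ℓ i y)
    (hd : G.dist v z = G.dist v y) : z = y :=
  TreeAux.eq_of_btw S.hT hz.2 hy.2 hd

lemma exists_onLeg (i : Fin a) {t : ℕ} (h1 : 1 ≤ t) (h2 : t ≤ G.dist v (ℓ i)) :
    ∃ z, onLeg G v ℓ i z ∧ G.dist v z = t := by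
  have hc := S.hc
  obtain ⟨p, hp⟩ := hc.exists_walk_length_eq_dist v (ℓ i)
  refine ⟨p.getVert t, ⟨?_, ?_⟩, ?_⟩
  · intro h
    have h3 := TreeAux.geo_seg hc p hp 0 t (by omega) (by omega)
    rw [p.getVert_zero, h] at h3
    simp [SimpleGraph.dist_self] at h3
    omega
  · have h3 := TreeAux.geo_seg hc p hp 0 t (by omega) (by omega)
    have h4 := TreeAux.geo_seg hc p hp t p.length (by omega) (by omega)
    rw [p.getVert_zero] at h3
    rw [p.getVert_length] at h4
    omega
  · have h3 := TreeAux.geo_seg hc p hp 0 t (by omega) (by omega)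
    rw [p.getVert_zero] at h3
    omega

end SpiderHyp

/-- The set of vertices strictly on leg `i`, as a `Finset`. -/
noncomputable def legF (G : SimpleGraph V) [Fintype V] (v : V) {a : ℕ} (ℓ : Fin a → V)
    (i : Fin a) : Finset V :=
  Finset.univ.filter (fun z => onLeg G v ℓ i z)

/-- The vertices on leg `i` within distance `m` of `v`. -/
noncomputable def zoneF (G : SimpleGraph V) [Fintype V] (v : V) {a : ℕ} (ℓ : Fin a → V)
    (i : Fin a) (m : ℕ) : Finset V :=
  Finset.univ.filter (fun z => onLeg G v ℓ i z ∧ G.dist v z ≤ m)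

lemma mem_legF {i : Fin a} {z : V} : z ∈ legF G v ℓ i ↔ onLeg G v ℓ i z := by
  simp [legF]

lemma mem_zoneF {i : Fin a} {m : ℕ} {z : V} :
    z ∈ zoneF G v ℓ i m ↔ onLeg G v ℓ i z ∧ G.dist v z ≤ m := by
  simp [zoneF]

lemma zoneF_subset_legF {i : Fin a} {m : ℕ} : zoneF G v ℓ i m ⊆ legF G v ℓ i := by
  intro z hz
  exact mem_legF.2 (mem_zoneF.1 hz).1

lemma mem_resSet {G : SimpleGraph V} [Fintype V] {x y z : V} :
    z ∈ resSet G x y ↔ G.dist x z ≠ G.dist y z := by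
  simp [resSet]

lemma pick_two (ha : 3 ≤ a) (i : Fin a) : ∃ p q : Fin a, p ≠ q ∧ p ≠ i ∧ q ≠ i := by
  by_cases h0 : i.val = 0
  · exact ⟨⟨1, by omega⟩, ⟨2, by omega⟩, by simp [Fin.ext_iff],
      by simp [Fin.ext_iff]; omega, by simp [Fin.ext_iff]; omega⟩
  · by_cases h1 : i.val = 1
    · exact ⟨⟨0, by omega⟩, ⟨2, by omega⟩, by simp [Fin.ext_iff],
        by simp [Fin.ext_iff]; omega, by simp [Fin.ext_iff]; omega⟩
    · exact ⟨⟨0, by omega⟩, ⟨1, by omega⟩, by simp [Fin.ext_iff],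
        by simp [Fin.ext_iff]; omega, by simp [Fin.ext_iff]; omega⟩

lemma pick_one (ha : 3 ≤ a) (i j : Fin a) : ∃ m : Fin a, m ≠ i ∧ m ≠ j := by
  by_cases h0 : i.val ≠ 0 ∧ j.val ≠ 0
  · exact ⟨⟨0, by omega⟩, by simp [Fin.ext_iff]; omega, by simp [Fin.ext_iff]; omega⟩
  · by_cases h1 : i.val ≠ 1 ∧ j.val ≠ 1
    · exact ⟨⟨1, by omega⟩, by simp [Fin.ext_iff]; omega, by simp [Fin.ext_iff]; omega⟩
    · push_neg at h0 h1
      refine ⟨⟨2, by omega⟩, ?_, ?_⟩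
      · simp only [Ne, Fin.ext_iff]
        omega
      · simp only [Ne, Fin.ext_iff]
        omega

namespace SpiderHyp

variable (S : SpiderHyp G v a ℓ)
include S

lemma legF_card (i : Fin a) : (legF G v ℓ i).card = G.dist v (ℓ i) := by
  classical
  have key : (legF G v ℓ i).card = (Finset.Icc 1 (G.dist v (ℓ i))).card := by
    refine Finset.card_bij (fun z _ => G.dist v z) ?_ ?_ ?_
    · intro z hz
      have hz' := mem_legF.1 hz
      exact Finset.mem_Icc.2 ⟨S.onLeg_pos hz', S.onLeg_le hz'⟩
    · intro z1 h1 z2 h2 hd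
      exact S.onLeg_inj (mem_legF.1 h1) (mem_legF.1 h2) hd
    · intro t ht
      obtain ⟨ht1, ht2⟩ := Finset.mem_Icc.1 ht
      obtain ⟨z, hz, hzd⟩ := S.exists_onLeg i ht1 ht2
      exact ⟨z, mem_legF.2 hz, hzd⟩
  rw [key]
  simp [Nat.card_Icc]

lemma zoneF_card {i : Fin a} {m : ℕ} (hm : m ≤ G.dist v (ℓ i)) :
    (zoneF G v ℓ i m).card = m := by
  classical
  have key : (zoneF G v ℓ i m).card = (Finset.Icc 1 m).card := by
    refine Finset.card_bij (fun z _ => G.dist v z) ?_ ?_ ?_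
    · intro z hz
      have hz' := mem_zoneF.1 hz
      exact Finset.mem_Icc.2 ⟨S.onLeg_pos hz'.1, hz'.2⟩
    · intro z1 h1 z2 h2 hd
      exact S.onLeg_inj (mem_zoneF.1 h1).1 (mem_zoneF.1 h2).1 hd
    · intro t ht
      obtain ⟨ht1, ht2⟩ := Finset.mem_Icc.1 ht
      obtain ⟨z, hz, hzd⟩ := S.exists_onLeg i ht1 (le_trans ht2 hm)
      exact ⟨z, mem_zoneF.2 ⟨hz, by rw [hzd]; exact ht2⟩, hzd⟩
  rw [key]
  simp [Nat.card_Icc]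

lemma legF_disj {i j : Fin a} (hij : i ≠ j) : Disjoint (legF G v ℓ i) (legF G v ℓ j) :=
  Finset.disjoint_left.2 fun z hi hj =>
    hij (S.leg_unique (mem_legF.1 hi) (mem_legF.1 hj))

lemma zoneF_disj {i j : Fin a} (hij : i ≠ j) {m : ℕ} :
    Disjoint (zoneF G v ℓ i m) (zoneF G v ℓ j m) :=
  Finset.disjoint_left.2 fun z hi hj =>
    hij (S.leg_unique (mem_zoneF.1 hi).1 (mem_zoneF.1 hj).1)

lemma master_auxA {y : V} {j : Fin a} (hy : onLeg G v ℓ j y) :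
    ∃ p q : Fin a, p ≠ q ∧
      ∀ z, (onLeg G v ℓ p z ∨ onLeg G v ℓ q z) → G.dist v z ≠ G.dist y z := by
  obtain ⟨p, q, hpq, hpj, hqj⟩ := pick_two S.ha j
  refine ⟨p, q, hpq, ?_⟩
  have key : ∀ m : Fin a, m ≠ j → ∀ z, onLeg G v ℓ m z → G.dist v z ≠ G.dist y z := by
    intro m hm z hz
    have hcross : G.dist y z = G.dist v y + G.dist v z :=
      S.dist_cross_leg (fun h => hm h.symm) hy hz
    have := S.onLeg_pos hy
    omega
  intro z hz
  rcases hz with hz | hz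
  · exact key p hpj z hz
  · exact key q hqj z hz

lemma master_auxB {x y : V} {i j : Fin a} (hx : onLeg G v ℓ i x) (hy : onLeg G v ℓ j y)
    (hij : i ≠ j) (hle : G.dist v x ≤ G.dist v y) :
    ∃ p q : Fin a, p ≠ q ∧
      ∀ z, (onLeg G v ℓ p z ∨ onLeg G v ℓ q z) → G.dist x z ≠ G.dist y z := by
  have htx := S.onLeg_pos hx
  have hty := S.onLeg_pos hy
  have legi : ∀ z, onLeg G v ℓ i z → G.dist x z ≠ G.dist y z := by
    intro z hz
    have h1 : G.dist z y = G.dist v z + G.dist v y := S.dist_cross_leg hij hz hy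
    have c1 : G.dist z y = G.dist y z := SimpleGraph.dist_comm ..
    have h2 := S.same_leg_cases hz hx
    have htz := S.onLeg_pos hz
    omega
  by_cases heq : G.dist v x = G.dist v y
  · refine ⟨i, j, hij, ?_⟩
    intro z hz
    rcases hz with hz | hz
    · exact legi z hz
    · have h1 : G.dist x z = G.dist v x + G.dist v z := S.dist_cross_leg hij hx hz
      have h2 := S.same_leg_cases hz hy
      have htz := S.onLeg_pos hz
      omega
  · obtain ⟨m, hmi, hmj⟩ := pick_one S.ha i j
    refine ⟨i, m, fun h => hmi h.symm, ?_⟩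
    intro z hz
    rcases hz with hz | hz
    · exact legi z hz
    · have h1 : G.dist x z = G.dist v x + G.dist v z :=
        S.dist_cross_leg (fun h => hmi h.symm) hx hz
      have h2 : G.dist z y = G.dist v z + G.dist v y :=
        S.dist_cross_leg hmj hz hy
      have c1 : G.dist z y = G.dist y z := SimpleGraph.dist_comm ..
      omega

lemma master {x y : V} (hxy : x ≠ y) :
    ∃ p q : Fin a, p ≠ q ∧
      ∀ z, (onLeg G v ℓ p z ∨ onLeg G v ℓ q z) → G.dist x z ≠ G.dist y z := by
  by_cases hxv : x = v
  · subst hxv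
    obtain ⟨j, hy⟩ := S.leg_cover (Ne.symm hxy)
    exact S.master_auxA hy
  by_cases hyv : y = v
  · subst hyv
    obtain ⟨i, hx⟩ := S.leg_cover hxv
    obtain ⟨p, q, hpq, h⟩ := S.master_auxA hx
    exact ⟨p, q, hpq, fun z hz => (h z hz).symm⟩
  obtain ⟨i, hx⟩ := S.leg_cover hxv
  obtain ⟨j, hy⟩ := S.leg_cover hyv
  by_cases hij : i = j
  · subst hij
    obtain ⟨p, q, hpq, hpi, hqi⟩ := pick_two S.ha i
    have htne : G.dist v x ≠ G.dist v y := fun h => hxy (S.onLeg_inj hx hy h)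
    have key : ∀ m : Fin a, m ≠ i → ∀ z, onLeg G v ℓ m z → G.dist x z ≠ G.dist y z := by
      intro m hm z hz
      have h1 : G.dist x z = G.dist v x + G.dist v z :=
        S.dist_cross_leg (fun h => hm h.symm) hx hz
      have h2 : G.dist y z = G.dist v y + G.dist v z :=
        S.dist_cross_leg (fun h => hm h.symm) hy hz
      omega
    exact ⟨p, q, hpq, fun z hz => hz.elim (key p hpi z) (key q hqi z)⟩
  rcases le_total (G.dist v x) (G.dist v y) with hle | hle
  · exact S.master_auxB hx hy hij hle
  · obtain ⟨p, q, hpq, h⟩ := S.master_auxB hy hx (Ne.symm hij) hle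
    exact ⟨p, q, hpq, fun z hz => (h z hz).symm⟩

lemma resSet_pair {i j : Fin a} (hij : i ≠ j) {x1 y1 : V}
    (hx : onLeg G v ℓ i x1) (hy : onLeg G v ℓ j y1)
    (hx1 : G.dist v x1 = 1) (hy1 : G.dist v y1 = 1) :
    resSet G x1 y1 = legF G v ℓ i ∪ legF G v ℓ j := by
  ext z
  rw [Finset.mem_union, mem_legF, mem_legF, mem_resSet]
  constructor
  · intro h
    by_contra hcon
    push_neg at hcon
    obtain ⟨hni, hnj⟩ := hcon
    by_cases hzv : z = v
    · refine h ?_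
      have e1 : G.dist x1 v = 1 := by rw [SimpleGraph.dist_comm]; exact hx1
      have e2 : G.dist y1 v = 1 := by rw [SimpleGraph.dist_comm]; exact hy1
      rw [hzv, e1, e2]
    · obtain ⟨m, hm⟩ := S.leg_cover hzv
      have hmi : m ≠ i := fun h => hni (h ▸ hm)
      have hmj : m ≠ j := fun h => hnj (h ▸ hm)
      have h1 : G.dist x1 z = G.dist v x1 + G.dist v z :=
        S.dist_cross_leg (fun h => hmi h.symm) hx hm
      have h2 : G.dist y1 z = G.dist v y1 + G.dist v z :=
        S.dist_cross_leg (fun h => hmj h.symm) hy hm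
      omega
  · intro h
    rcases h with hz | hz
    · have h1 : G.dist z y1 = G.dist v z + G.dist v y1 := S.dist_cross_leg hij hz hy
      have c1 : G.dist z y1 = G.dist y1 z := SimpleGraph.dist_comm ..
      have h2 := S.same_leg_cases hz hx
      have htz := S.onLeg_pos hz
      omega
    · have h1 : G.dist z x1 = G.dist v z + G.dist v x1 :=
        S.dist_cross_leg (Ne.symm hij) hz hx
      have c1 : G.dist z x1 = G.dist x1 z := SimpleGraph.dist_comm ..
      have h2 := S.same_leg_cases hz hy
      have htz := S.onLeg_pos hz
      omega

lemma kappa_eq {i0 i1 : Fin a} (h0 : i0.val = 0) (h1 : i1.val = 1) :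
    kappa G = G.dist v (ℓ i0) + G.dist v (ℓ i1) := by
  have hne01 : i0 ≠ i1 := by
    intro hh
    rw [Fin.ext_iff] at hh
    omega
  obtain ⟨x1, hx1, hx1d⟩ := S.exists_onLeg i0 le_rfl (S.nl_pos i0)
  obtain ⟨y1, hy1, hy1d⟩ := S.exists_onLeg i1 le_rfl (S.nl_pos i1)
  have hxyne : x1 ≠ y1 := by
    intro h
    exact hne01 (S.leg_unique hx1 (h ▸ hy1))
  have hcard : (resSet G x1 y1).card = G.dist v (ℓ i0) + G.dist v (ℓ i1) := by
    rw [S.resSet_pair hne01 hx1 hy1 hx1d hy1d,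
      Finset.card_union_of_disjoint (S.legF_disj hne01), S.legF_card, S.legF_card]
  have hmem : G.dist v (ℓ i0) + G.dist v (ℓ i1) ∈
      {n : ℕ | ∃ x y : V, x ≠ y ∧ (resSet G x y).card = n} :=
    ⟨x1, y1, hxyne, hcard⟩
  refine le_antisymm (Nat.sInf_le hmem) (le_csInf ⟨_, hmem⟩ ?_)
  rintro n ⟨x, y, hxy, rfl⟩
  obtain ⟨p, q, hpq, h⟩ := S.master hxy
  have hsub : legF G v ℓ p ∪ legF G v ℓ q ⊆ resSet G x y := by
    intro z hz
    rw [Finset.mem_union, mem_legF, mem_legF] at hz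
    exact mem_resSet.2 (h z hz)
  have hcardle := Finset.card_le_card hsub
  rw [Finset.card_union_of_disjoint (S.legF_disj hpq), S.legF_card, S.legF_card] at hcardle
  have hord : G.dist v (ℓ i0) + G.dist v (ℓ i1) ≤ G.dist v (ℓ p) + G.dist v (ℓ q) := by
    rcases hpq.lt_or_gt with hlt | hlt
    · have e1 := S.hmono i0 p (by rw [Fin.le_def]; omega)
      have e2 := S.hmono i1 q (by rw [Fin.le_def]; have := hlt; omega)
      omega
    · have e1 := S.hmono i0 q (by rw [Fin.le_def]; omega)
      have e2 := S.hmono i1 p (by rw [Fin.le_def]; have := hlt; omega)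
      omega
  omega


lemma frac_eq {i0 i1 : Fin a} (h0 : i0.val = 0) (h1 : i1.val = 1)
    (hn : G.dist v (ℓ i0) = G.dist v (ℓ i1)) {k : ℝ} (hk1 : 1 ≤ k)
    (hk2 : k ≤ ((G.dist v (ℓ i0) + G.dist v (ℓ i1) : ℕ) : ℝ)) :
    fracKDim G k = k * a / 2 := by
  classical
  have ha := S.ha
  set n : ℕ := G.dist v (ℓ i0) with hndef
  have hn1 : 1 ≤ n := S.nl_pos i0
  have hnR : (0:ℝ) < (n:ℝ) := by exact_mod_cast hn1
  have hk2' : k ≤ 2 * (n:ℝ) := by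
    have e : ((G.dist v (ℓ i0) + G.dist v (ℓ i1) : ℕ) : ℝ) = 2 * (n:ℝ) := by
      rw [← hn, ← hndef]
      push_cast
      ring
    linarith [hk2, e.le]
  have hni : ∀ i, n ≤ G.dist v (ℓ i) := fun i => S.hmono i0 i (by rw [Fin.le_def]; omega)
  set g : V → ℝ := fun z => if z ≠ v ∧ G.dist v z ≤ n then k / (2*(n:ℝ)) else 0 with hgdef
  have hgz : ∀ z, g z = if z ≠ v ∧ G.dist v z ≤ n then k / (2*(n:ℝ)) else 0 := fun z => rfl
  have hgpos : ∀ z, 0 ≤ g z := by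
    intro z
    rw [hgz]
    split_ifs
    · apply div_nonneg <;> linarith
    · linarith
  have hgle : ∀ z, g z ≤ 1 := by
    intro z
    rw [hgz]
    split_ifs
    · rw [div_le_one (by linarith)]
      linarith
    · linarith
  have hzone : ∀ i : Fin a, ∀ z ∈ zoneF G v ℓ i n, g z = k / (2*(n:ℝ)) := by
    intro i z hz
    obtain ⟨ho, hle⟩ := mem_zoneF.1 hz
    rw [hgz, if_pos ⟨ho.1, hle⟩]
  have hsumzone : ∀ i : Fin a, ∑ z ∈ zoneF G v ℓ i n, g z = k / 2 := by
    intro i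
    rw [Finset.sum_congr rfl (hzone i), Finset.sum_const, S.zoneF_card (hni i), nsmul_eq_mul]
    field_simp
  have hres : IsKResolving G k g := by
    refine ⟨fun z => ⟨hgpos z, hgle z⟩, ?_⟩
    intro x y hxy
    obtain ⟨p, q, hpq, h⟩ := S.master hxy
    have hsub : zoneF G v ℓ p n ∪ zoneF G v ℓ q n ⊆ resSet G x y := by
      intro z hz
      rw [Finset.mem_union, mem_zoneF, mem_zoneF] at hz
      refine mem_resSet.2 (h z ?_)
      tauto
    have hle1 : ∑ z ∈ zoneF G v ℓ p n ∪ zoneF G v ℓ q n, g z ≤ ∑ z ∈ resSet G x y, g z :=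
      Finset.sum_le_sum_of_subset_of_nonneg hsub (fun z _ _ => hgpos z)
    rw [Finset.sum_union (S.zoneF_disj hpq), hsumzone p, hsumzone q] at hle1
    linarith
  have hB : ∑ z, g z = k * (a:ℝ) / 2 := by
    have hzero : ∀ z ∈ Finset.univ, z ∉ Finset.univ.biUnion (fun i => zoneF G v ℓ i n) →
        g z = 0 := by
      intro z _ hz
      by_cases hzv : z = v
      · rw [hgz, if_neg (by tauto)]
      · by_cases hd : G.dist v z ≤ n
        · exfalso
          obtain ⟨m, hm⟩ := S.leg_cover hzv
          exact hz (Finset.mem_biUnion.2 ⟨m, Finset.mem_univ m, mem_zoneF.2 ⟨hm, hd⟩⟩)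
        · rw [hgz, if_neg (by tauto)]
    rw [← Finset.sum_subset (Finset.subset_univ _) hzero,
      Finset.sum_biUnion (fun i _ j _ hij => S.zoneF_disj hij),
      Finset.sum_congr rfl (fun i _ => hsumzone i), Finset.sum_const,
      Finset.card_univ, Fintype.card_fin, nsmul_eq_mul]
    ring
  have hmem : k * (a:ℝ) / 2 ∈
      {s : ℝ | ∃ g : V → ℝ, IsKResolving G k g ∧ s = ∑ z, g z} :=
    ⟨g, hres, hB.symm⟩
  have hlb : ∀ s ∈ {s : ℝ | ∃ g : V → ℝ, IsKResolving G k g ∧ s = ∑ z, g z},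
      k * (a:ℝ) / 2 ≤ s := by
    rintro s ⟨g', ⟨hb', hr'⟩, rfl⟩
    set sf : Fin a → ℝ := fun i => ∑ z ∈ legF G v ℓ i, g' z with hsf
    have hs0 : ∀ i, 0 ≤ sf i := fun i => Finset.sum_nonneg (fun z _ => (hb' z).1)
    have hpair : ∀ i j, i ≠ j → k ≤ sf i + sf j := by
      intro i j hij
      obtain ⟨x1, hx1, hx1d⟩ := S.exists_onLeg i le_rfl (S.nl_pos i)
      obtain ⟨y1, hy1, hy1d⟩ := S.exists_onLeg j le_rfl (S.nl_pos j)
      have hne : x1 ≠ y1 := fun h => hij (S.leg_unique hx1 (h ▸ hy1))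
      have hres2 := hr' x1 y1 hne
      rwa [S.resSet_pair hij hx1 hy1 hx1d hy1d, Finset.sum_union (S.legF_disj hij)] at hres2
    obtain ⟨im, _, hmin⟩ := Finset.exists_min_image Finset.univ sf
      ⟨⟨0, by omega⟩, Finset.mem_univ _⟩
    have hminu : ∀ j, sf im ≤ sf j := fun j => hmin j (Finset.mem_univ j)
    have hT1 : (a:ℝ) * sf im ≤ ∑ i, sf i := by
      have := Finset.card_nsmul_le_sum Finset.univ sf (sf im) (fun j _ => hminu j)
      rwa [Finset.card_univ, Fintype.card_fin, nsmul_eq_mul] at this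
    have hT2 : ((a:ℝ) - 1) * (k - sf im) ≤ ∑ j ∈ Finset.univ.erase im, sf j := by
      have h2 := Finset.card_nsmul_le_sum (Finset.univ.erase im) sf (k - sf im)
        (fun j hj => by
          have hjne : j ≠ im := (Finset.mem_erase.1 hj).1
          have := hpair j im hjne
          linarith)
      rw [Finset.card_erase_of_mem (Finset.mem_univ im), Finset.card_univ,
        Fintype.card_fin, nsmul_eq_mul, Nat.cast_sub (by omega : 1 ≤ a)] at h2
      simpa using h2
    have hT3 : ∑ i, sf i = sf im + ∑ j ∈ Finset.univ.erase im, sf j :=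
      (Finset.add_sum_erase _ _ (Finset.mem_univ im)).symm
    have haR : (3:ℝ) ≤ (a:ℝ) := by exact_mod_cast ha
    have hTk : k * (a:ℝ) / 2 ≤ ∑ i, sf i := by
      nlinarith [hT1, hT2, hT3, hs0 im, hk1, haR]
    have hsum2 : ∑ i, sf i ≤ ∑ z, g' z := by
      have hd : ∑ z ∈ Finset.univ.biUnion (fun i => legF G v ℓ i), g' z = ∑ i, sf i :=
        Finset.sum_biUnion (fun i _ j _ hij => S.legF_disj hij)
      rw [← hd]
      exact Finset.sum_le_sum_of_subset_of_nonneg (Finset.subset_univ _)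
        (fun z _ _ => (hb' z).1)
    linarith
  have hnonempty : {s : ℝ | ∃ g : V → ℝ, IsKResolving G k g ∧ s = ∑ z, g z}.Nonempty :=
    ⟨_, hmem⟩
  have hbdd : BddBelow {s : ℝ | ∃ g : V → ℝ, IsKResolving G k g ∧ s = ∑ z, g z} :=
    ⟨k * (a:ℝ) / 2, fun s hs => hlb s hs⟩
  show sInf _ = _
  exact le_antisymm (csInf_le hbdd hmem) (le_csInf hnonempty hlb)

end SpiderHyp

end Spider

end FracDim

open FracDim in
/-- Let `T` be a tree with exactly one exterior major vertex `v`, and let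
`ℓ 0, …, ℓ (a-1)` (`a ≥ 3`) enumerate the terminal vertices of `v`, ordered so that
`d(v, ℓ i)` is monotone. Then `κ(T) = d(ℓ 0, ℓ 1)`, and if `d(v, ℓ 0) = d(v, ℓ 1)` then
`dim_f^k(T) = k·a/2` for every real `k` with `1 ≤ k ≤ κ(T)`. -/
theorem fracKDim_tree_one_exterior_eq {V : Type*} [Fintype V] (G : SimpleGraph V)
    [DecidableRel G.Adj] (hT : G.IsTree)
    (v : V) (hv : IsExteriorMajor G v) (huniq : ∀ w, IsExteriorMajor G w → w = v)
    (a : ℕ) (ha : 3 ≤ a) (ℓ : Fin a → V) (hinj : Function.Injective ℓ)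
    (hterm : ∀ i, IsTerminalOf G (ℓ i) v)
    (hall : ∀ u, IsTerminalOf G u v → ∃ i, ℓ i = u)
    (hmono : ∀ i j : Fin a, i ≤ j → G.dist v (ℓ i) ≤ G.dist v (ℓ j)) :
    kappa G = G.dist (ℓ ⟨0, by omega⟩) (ℓ ⟨1, by omega⟩) ∧
      (G.dist v (ℓ ⟨0, by omega⟩) = G.dist v (ℓ ⟨1, by omega⟩) →
        ∀ k : ℝ, 1 ≤ k → k ≤ (kappa G : ℝ) →
          fracKDim G k = k * (a : ℝ) / 2) := by
  classical
  have hmaj := FracDim.major_eq hT hv huniq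
  have S : FracDim.SpiderHyp G v a ℓ := ⟨hT, hv, hmaj, ha, hinj, hterm, hall, hmono⟩
  have hlt0 : 0 < a := by omega
  have hlt1 : 1 < a := by omega
  have hk := S.kappa_eq (i0 := ⟨0, hlt0⟩) (i1 := ⟨1, hlt1⟩) rfl rfl
  have hne : (⟨0, hlt0⟩ : Fin a) ≠ ⟨1, hlt1⟩ := by
    intro h
    rw [Fin.mk.injEq] at h
    omega
  have hs := S.split hne
  have c : G.dist (ℓ ⟨0, hlt0⟩) v = G.dist v (ℓ ⟨0, hlt0⟩) := SimpleGraph.dist_comm ..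
  constructor
  · have goal' : kappa G = G.dist (ℓ ⟨0, hlt0⟩) (ℓ ⟨1, hlt1⟩) := by rw [hk, ← hs, c]
    exact goal'
  · intro hd k hk1 hk2
    have hd' : G.dist v (ℓ (⟨0, hlt0⟩ : Fin a)) = G.dist v (ℓ ⟨1, hlt1⟩) := hd
    rw [hk] at hk2
    exact S.frac_eq rfl rfl hd' hk1 (by exact_mod_cast hk2)
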